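/- In a Binary Spray and Wait dissemination with replication factor L = 2^k in a network with at least 2^k + 1 nodes (excluding the destination), the set of reachable copy repartitions (up to node identity) is exactly the set of partitions of 2^k into powers of 2; hence the Markov chain modeling the spray phase with an added absorbing delivery state has β(k) + 1 states. -/
import Mathlib


/-- The number of partitions of `n` into powers of 2. -/
noncomputable def binaryPartitions (n : ℕ) : ℕ :=
  Nat.card {m : Multiset ℕ // m.sum = n ∧ ∀ x ∈ m, ∃ j : ℕ, x = 2 ^ j}

/-- `β k` is the number of partitions of `2 ^ k` into powers of 2. -/
noncomputable def betaSeq (k : ℕ) : ℕ := binaryPartitions (2 ^ k)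

/-- Binary Spray and Wait splitting move on copy repartitions (multisets):
a part `2 ^ m` with `m ≥ 1` is replaced by two parts `2 ^ (m - 1)`. -/
def BSWStep (s t : Multiset ℕ) : Prop :=
  ∃ m : ℕ, 1 ≤ m ∧ (2 ^ m) ∈ s ∧
    t = (2 ^ (m - 1)) ::ₘ (2 ^ (m - 1)) ::ₘ s.erase (2 ^ m)

lemma pow_split (m : ℕ) (hm : 1 ≤ m) : 2 ^ (m - 1) + 2 ^ (m - 1) = 2 ^ m := by
  have h : m - 1 + 1 = m := by omega
  calc 2 ^ (m - 1) + 2 ^ (m - 1) = 2 ^ (m - 1) * 2 := by ring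
    _ = 2 ^ m := by rw [← pow_succ, h]

lemma bsw_invariant {k : ℕ} {s : Multiset ℕ}
    (h : Relation.ReflTransGen BSWStep {2 ^ k} s) :
    s.sum = 2 ^ k ∧ ∀ x ∈ s, ∃ j : ℕ, x = 2 ^ j := by
  induction h with
  | refl =>
    refine ⟨by simp, ?_⟩
    intro x hx
    rw [Multiset.mem_singleton] at hx
    exact ⟨k, hx⟩
  | @tail b c h1 h2 ih =>
    obtain ⟨m, hm, hmem, rfl⟩ := h2
    obtain ⟨hsum, hpow⟩ := ih
    constructor
    · have h1' := Multiset.cons_erase hmem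
      have h2' : ((2 : ℕ) ^ m ::ₘ (Multiset.erase b (2 ^ m))).sum = 2 ^ k := by
        rw [h1']; exact hsum
      simp only [Multiset.sum_cons] at h2' ⊢
      rw [← add_assoc, pow_split m hm]; exact h2'
    · intro x hx
      simp only [Multiset.mem_cons] at hx
      rcases hx with rfl | rfl | hx
      · exact ⟨m - 1, rfl⟩
      · exact ⟨m - 1, rfl⟩
      · exact hpow x (Multiset.mem_of_mem_erase hx)

lemma bsw_reach (k : ℕ) : ∀ n (s : Multiset ℕ), Multiset.card s ≤ n →
    s.sum = 2 ^ k → (∀ x ∈ s, ∃ j : ℕ, x = 2 ^ j) →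
    Relation.ReflTransGen BSWStep {2 ^ k} s := by
  intro n
  induction n with
  | zero =>
    intro s hc hsum _
    have : s = 0 := by
      rw [← Multiset.card_eq_zero]; omega
    subst this
    have : (1 : ℕ) ≤ 2 ^ k := Nat.one_le_two_pow
    simp at hsum; omega
  | succ n ih =>
    intro s hc hsum hpow
    by_cases hle : Multiset.card s ≤ n
    · exact ih s hle hsum hpow
    rcases Nat.lt_or_ge (Multiset.card s) 2 with h2 | h2
    · -- card s = 1
      have h1 : Multiset.card s = 1 := by omega
      obtain ⟨a, rfl⟩ := Multiset.card_eq_one.mp h1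
      have ha : a = 2 ^ k := by simpa using hsum
      subst ha
      exact Relation.ReflTransGen.refl
    · -- card s ≥ 2
      have hne : s ≠ 0 := by
        intro h; rw [h] at h2; simp at h2
      have hfne : s.toFinset.Nonempty := by
        rw [Multiset.toFinset_nonempty]; exact hne
      set a := s.toFinset.min' hfne with ha
      have hamem : a ∈ s := Multiset.mem_toFinset.mp (s.toFinset.min'_mem hfne)
      have hmin : ∀ x ∈ s, a ≤ x := fun x hx =>
        s.toFinset.min'_le x (Multiset.mem_toFinset.mpr hx)
      obtain ⟨j, haj⟩ := hpow a hamem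
      -- a < 2 ^ k
      have heq : s = a ::ₘ s.erase a := (Multiset.cons_erase hamem).symm
      have hpos : 0 < (s.erase a).sum := by
        have hex : ∃ b, b ∈ s.erase a := by
          rw [← Multiset.card_pos_iff_exists_mem, Multiset.card_erase_of_mem hamem, Nat.pred_eq_sub_one]
          omega
        obtain ⟨b, hb⟩ := hex
        obtain ⟨i, hbi⟩ := hpow b (Multiset.mem_of_mem_erase hb)
        have hb1 : 1 ≤ b := by rw [hbi]; exact Nat.one_le_two_pow
        have := Multiset.single_le_sum (fun x _ => Nat.zero_le x) b hb
        omega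
      have hs2 : a + (s.erase a).sum = 2 ^ k := by
        rw [← hsum]
        conv_rhs => rw [heq]
        simp [Multiset.sum_cons]
      have hak : a < 2 ^ k := by omega
      have hjk : j < k := by
        have h' : (2 : ℕ) ^ j < 2 ^ k := by rw [← haj]; exact hak
        exact (Nat.pow_lt_pow_iff_right (by norm_num)).mp h'
      -- count parity argument
      set c := s.count a with hcdef
      have hc1 : 1 ≤ c := Multiset.one_le_count_iff_mem.mpr hamem
      set t := s.filter (fun x => ¬ x = a) with htdef
      have hsplit : s.filter (fun x => x = a) + t = s := Multiset.filter_add_not _ s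
      have hfa : s.filter (fun x => x = a) = Multiset.replicate c a := by
        rw [hcdef]
        exact Multiset.filter_eq' s a
      have hts : c * a + t.sum = 2 ^ k := by
        rw [← hsum, ← hsplit, Multiset.sum_add, hfa, Multiset.sum_replicate, smul_eq_mul]
      have hdvd : 2 ^ (j + 1) ∣ t.sum := by
        apply Multiset.dvd_sum
        intro x hx
        have hxs := Multiset.mem_of_mem_filter hx
        have hxa : x ≠ a := by simpa using Multiset.of_mem_filter hx
        obtain ⟨i, rfl⟩ := hpow x hxs
        have hij : j < i := by
          by_contra h
          push_neg at h
          have h1 : (2 : ℕ) ^ i ≤ 2 ^ j := Nat.pow_le_pow_right (by norm_num) h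
          have h2 : (2 : ℕ) ^ j ≤ 2 ^ i := by rw [← haj]; exact hmin _ hxs
          exact hxa (by rw [haj]; omega)
        exact pow_dvd_pow 2 (by omega)
      have hts' : c * 2 ^ j + t.sum = 2 ^ k := by rw [← haj]; exact hts
      have hceven : 2 ∣ c := by
        obtain ⟨d, hd⟩ : (2 : ℕ) ^ (j + 1) ∣ c * 2 ^ j := by
          have h1 : (2 : ℕ) ^ (j + 1) ∣ 2 ^ k := pow_dvd_pow 2 (by omega)
          have h2 : c * 2 ^ j = 2 ^ k - t.sum := by omega
          rw [h2]; exact Nat.dvd_sub h1 hdvd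
        refine ⟨d, ?_⟩
        have h3 : c * 2 ^ j = (2 * d) * 2 ^ j := by
          rw [hd, pow_succ]; ring
        exact Nat.eq_of_mul_eq_mul_right (Nat.two_pow_pos j) h3
      have hc2 : 2 ≤ c := by omega
      have ha2 : a ∈ s.erase a := by
        rw [← Multiset.count_pos, Multiset.count_erase_self]; omega
      set u := (s.erase a).erase a with hu
      have hs3 : s = a ::ₘ a ::ₘ u := by
        rw [hu, Multiset.cons_erase ha2, Multiset.cons_erase hamem]
      set t' := (2 : ℕ) ^ (j + 1) ::ₘ u with ht'
      have haa : (2 : ℕ) ^ j + 2 ^ j = 2 ^ (j + 1) := by rw [pow_succ]; ring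
      have hsumu : a + (a + u.sum) = 2 ^ k := by
        rw [← hsum]
        conv_rhs => rw [hs3]
        simp [Multiset.sum_cons]
      have hsum' : t'.sum = 2 ^ k := by
        rw [ht', Multiset.sum_cons]
        rw [haj] at hsumu
        omega
      have hpow' : ∀ x ∈ t', ∃ i : ℕ, x = 2 ^ i := by
        intro x hx
        rw [ht', Multiset.mem_cons] at hx
        rcases hx with rfl | hx
        · exact ⟨j + 1, rfl⟩
        · exact hpow x (by
            rw [hs3]
            exact Multiset.mem_cons_of_mem (Multiset.mem_cons_of_mem hx))
      have hcard' : Multiset.card t' ≤ n := by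
        have hcs : Multiset.card s = Multiset.card u + 2 := by
          rw [hs3]; simp [Multiset.card_cons]
        rw [ht', Multiset.card_cons]
        omega
      have hreach := ih t' hcard' hsum' hpow'
      refine hreach.tail ?_
      refine ⟨j + 1, by omega, by rw [ht']; exact Multiset.mem_cons_self _ _, ?_⟩
      rw [ht', Multiset.erase_cons_head]
      simp only [Nat.add_sub_cancel]
      rw [← haj]
      exact hs3

/-- In a BSW dissemination with replication factor `2 ^ k` in a network with at
least `2 ^ k + 1` non-destination nodes, the reachable copy repartitions are
exactly the partitions of `2 ^ k` into powers of 2, so the Markov chain with an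
added absorbing state has `β k + 1` states. -/
theorem bsw_reachable_states (k N : ℕ) (hN : 2 ^ k + 1 ≤ N) :
    {s : Multiset ℕ | Relation.ReflTransGen BSWStep {2 ^ k} s} =
      {s : Multiset ℕ | s.sum = 2 ^ k ∧ ∀ x ∈ s, ∃ j : ℕ, x = 2 ^ j} ∧
    Nat.card {s : Multiset ℕ // Relation.ReflTransGen BSWStep {2 ^ k} s} + 1 =
      betaSeq k + 1 := by
  have hset : {s : Multiset ℕ | Relation.ReflTransGen BSWStep {2 ^ k} s} =
      {s : Multiset ℕ | s.sum = 2 ^ k ∧ ∀ x ∈ s, ∃ j : ℕ, x = 2 ^ j} := by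
    ext s
    constructor
    · exact fun h => bsw_invariant h
    · rintro ⟨h1, h2⟩
      exact bsw_reach k (Multiset.card s) s le_rfl h1 h2
  refine ⟨hset, ?_⟩
  congr 1
  rw [betaSeq, binaryPartitions]
  exact Nat.card_congr (Equiv.subtypeEquivRight fun s => Set.ext_iff.mp hset s)
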